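/- Under the hypotheses of the finite mass theorem (finite mass m, w = m² - |Φ|² ≥ 0 decaying at infinity, Δw = 2|∇Φ|², and the Bochner inequality Δ|∇Φ|² ≤ 2c‖F_∇‖_{L^∞}|∇Φ|² with |∇Φ| decaying at infinity), one has the pointwise bound |∇Φ|² ≤ c‖F_∇‖_{L^∞} (m² - |Φ|²) on all of X. -/

import Mathlib

/-- Abstract model: `X` is the complete noncompact manifold with basepoint
`o` and Laplacian `lap = Δ`; `u = |∇Φ|²`, `Φsq = |Φ|²`, `w = m² - |Φ|² ≥ 0` with
`Δw = 2|∇Φ|²`; the Bochner inequality `Δ|∇Φ|² ≤ 2c‖F_∇‖_{L^∞}|∇Φ|²` holds, and both `u`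
and `w` decay uniformly to zero at infinity.  Linearity of `Δ` (`hlaplin`) and the maximum
principle for superharmonic functions decaying at infinity (`hMax`) are hypothesized.
Conclusion: `|∇Φ|² ≤ c‖F_∇‖_{L^∞}(m² - |Φ|²)` pointwise on all of `X`. -/
theorem stmt14 {X : Type*} [MetricSpace X] (o : X)
    (lap : (X → ℝ) → (X → ℝ))
    (u Φsq : X → ℝ) (m c Fnorm : ℝ)
    (hc : 0 < c) (hFnorm : 0 ≤ Fnorm)
    (hu0 : ∀ x, 0 ≤ u x)
    (hw0 : ∀ x, 0 ≤ m ^ 2 - Φsq x)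
    (hlapw : lap (fun x => m ^ 2 - Φsq x) = fun x => 2 * u x)
    (hBochner : ∀ x, lap u x ≤ 2 * c * Fnorm * u x)
    (hudec : ∀ ε > 0, ∃ R, ∀ x, R ≤ dist o x → u x ≤ ε)
    (hwdec : ∀ ε > 0, ∃ R, ∀ x, R ≤ dist o x → m ^ 2 - Φsq x ≤ ε)
    (hlaplin : ∀ (a : ℝ) (f g : X → ℝ),
      lap (fun x => a * f x - g x) = fun x => a * lap f x - lap g x)
    (hMax : ∀ f : X → ℝ, (∀ x, 0 ≤ lap f x) →
      (∀ ε > 0, ∃ R, ∀ x, R ≤ dist o x → |f x| ≤ ε) → ∀ x, 0 ≤ f x) :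
    ∀ x, u x ≤ c * Fnorm * (m ^ 2 - Φsq x) := by
  have hcF : 0 ≤ c * Fnorm := mul_nonneg hc.le hFnorm
  have key := hMax (fun x => c * Fnorm * (m ^ 2 - Φsq x) - u x) ?_ ?_
  · intro x
    have := key x
    linarith
  · intro x
    have h1 := congrFun (hlaplin (c * Fnorm) (fun x => m ^ 2 - Φsq x) u) x
    rw [h1, hlapw]
    have := hBochner x
    simp only
    nlinarith
  · intro ε hε
    obtain ⟨R1, hR1⟩ := hudec (ε / 2) (by linarith)
    obtain ⟨R2, hR2⟩ := hwdec (ε / (2 * (c * Fnorm + 1))) (by positivity)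
    refine ⟨max R1 R2, fun x hx => ?_⟩
    have hu := hR1 x (le_trans (le_max_left _ _) hx)
    have hw := hR2 x (le_trans (le_max_right _ _) hx)
    have hwb : c * Fnorm * (m ^ 2 - Φsq x) ≤ ε / 2 := by
      have h1 : c * Fnorm * (m ^ 2 - Φsq x) ≤ (c * Fnorm + 1) * (ε / (2 * (c * Fnorm + 1))) := by
        apply mul_le_mul (by linarith) hw (hw0 x) (by positivity)
      have h2 : (c * Fnorm + 1) * (ε / (2 * (c * Fnorm + 1))) = ε / 2 := by
        field_simp
      linarith
    rw [abs_le]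
    have h3 : 0 ≤ c * Fnorm * (m ^ 2 - Φsq x) := mul_nonneg hcF (hw0 x)
    have h4 := hu0 x
    constructor <;> linarith
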